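/- Let n be an even positive integer, F = 𝔽_{2^n}, R = W₂(F), and let f : F → F be a pseudo-planar function with f(0) = 0. Set b = 2^{(n−2)/2} and for each additive character χ of (R,+) with values in ℂ let W_f(χ) = ∑_{x ∈ F} χ(τ(x) + 2·τ(f(x)^{2^{n-1}})). Then, with i = √−1: the number of additive characters χ with W_f(χ) = 4b² is 1; with W_f(χ) = 0 is 4b² − 1; with W_f(χ) = 2b is b(4b³ + 4b² − b − 1); with W_f(χ) = −2b is b(4b³ − 4b² − b + 1); with W_f(χ) = 2b·i is b²(4b² − 1); and with W_f(χ) = −2b·i is b²(4b² − 1). -/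

import Mathlib

open scoped Classical

noncomputable section

/-- The Galois ring `GR(4,n)`, realized as length-2 2-typical truncated Witt vectors
over `F = 𝔽_{2^n}`. -/
abbrev GR (n : ℕ) : Type := TruncatedWittVector 2 2 (GaloisField 2 n)

/-- The truncated Teichmüller lift `τ : F → W₂(F)`. -/
def teich (n : ℕ) (x : GaloisField 2 n) : GR n :=
  WittVector.truncate 2 (WittVector.teichmuller 2 x)

/-- The lifted set `D_f = {τ(x) + 2·τ(f(x)^(2^(n-1))) : x ∈ F} ⊆ GR(4,n)`. -/
def Dset (n : ℕ) (f : GaloisField 2 n → GaloisField 2 n) : Set (GR n) :=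
  {g | ∃ x : GaloisField 2 n, g = teich n x + 2 * teich n (f x ^ 2 ^ (n - 1))}

/-- `S₁ = D_f \ {0}`. -/
def S1 (n : ℕ) (f : GaloisField 2 n → GaloisField 2 n) : Set (GR n) :=
  Dset n f \ {0}

/-- `S₂ = {−s : s ∈ S₁}`. -/
def S2 (n : ℕ) (f : GaloisField 2 n → GaloisField 2 n) : Set (GR n) :=
  (fun s => -s) '' S1 n f

/-- `S₃ = 2R \ {0}`. -/
def S3 (n : ℕ) : Set (GR n) :=
  {g | ∃ x : GR n, g = 2 * x} \ {0}

/-- `S₄`: the elements outside `S₀ ∪ S₁ ∪ S₂ ∪ S₃` appearing in the multiset `D_f²`. -/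
def S4 (n : ℕ) (f : GaloisField 2 n → GaloisField 2 n) : Set (GR n) :=
  {g | g ∉ ({0} : Set (GR n)) ∪ S1 n f ∪ S2 n f ∪ S3 n ∧
    ∃ x ∈ Dset n f, ∃ y ∈ Dset n f, g = x + y}

/-- `S₅`: the remaining elements. -/
def S5 (n : ℕ) (f : GaloisField 2 n → GaloisField 2 n) : Set (GR n) :=
  {g | g ∉ ({0} : Set (GR n)) ∪ S1 n f ∪ S2 n f ∪ S3 n ∪ S4 n f}

/-! ### Auxiliary machinery -/

section WittCoeff

open MvPolynomial WittVector Finset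

lemma PP.wsr_zero : wittStructureRat 2 (X (0:Fin 2) + X 1 : MvPolynomial (Fin 2) ℚ) 0
    = X ((0:Fin 2), 0) + X (1, 0) := by
  have h := wittStructureRat_rec_aux 2 (X (0:Fin 2) + X 1 : MvPolynomial (Fin 2) ℚ) 0
  simpa [wittPolynomial_zero] using h

lemma PP.wsr_one : wittStructureRat 2 (X (0:Fin 2) + X 1 : MvPolynomial (Fin 2) ℚ) 1
    = X ((0:Fin 2), 1) + X (1, 1) - X (0, 0) * X (1, 0) := by
  have h := wittStructureRat_rec_aux 2 (X (0:Fin 2) + X 1 : MvPolynomial (Fin 2) ℚ) 1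
  simp only [range_one, Finset.sum_singleton, PP.wsr_zero, wittPolynomial_one, pow_zero, pow_one,
    map_add, bind₁_X_right, rename_X, map_mul, bind₁_C_right, C_1, one_mul, map_pow] at h
  refine mul_right_cancel₀ (b := (C ((2:ℕ):ℚ) : MvPolynomial (Fin 2 × ℕ) ℚ))
    (by simp) ?_
  rw [h]
  simp only [rename_C]
  have hC : (C ((2:ℕ):ℚ) : MvPolynomial (Fin 2 × ℕ) ℚ) = 2 := by
    rw [Nat.cast_ofNat]; exact map_ofNat C 2
  rw [hC]
  norm_num
  ring

lemma PP.wittAdd_one : (wittAdd 2 1 : MvPolynomial (Fin 2 × ℕ) ℤ) =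
    X (0, 1) + X (1, 1) - X (0, 0) * X (1, 0) := by
  apply MvPolynomial.map_injective (Int.castRingHom ℚ) Int.cast_injective
  rw [show (wittAdd 2 : ℕ → MvPolynomial (Fin 2 × ℕ) ℤ) = wittStructureInt 2 (X 0 + X 1) from rfl,
    map_wittStructureInt]
  simp only [map_add, map_X, map_sub, map_mul]
  rw [PP.wsr_one]

lemma PP.wv_add_coeff_one {R : Type*} [CommRing R] (x y : WittVector 2 R) :
    (x + y).coeff 1 = x.coeff 1 + y.coeff 1 - x.coeff 0 * y.coeff 0 := by
  rw [WittVector.add_coeff, PP.wittAdd_one]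
  simp [peval, Function.uncurry]

end WittCoeff

namespace PP

section E2sec

variable {K : Type*} [CommRing K]

/-- coordinates on length-2 truncated Witt vectors -/
def E2 (u v : K) : TruncatedWittVector 2 2 K := TruncatedWittVector.mk 2 ![u, v]

omit [CommRing K] in
lemma E2_coeff0 (u v : K) : (E2 u v).coeff 0 = u := rfl

omit [CommRing K] in
lemma E2_coeff1 (u v : K) : (E2 u v).coeff 1 = v := rfl

lemma truncate_eq_E2 (x : WittVector 2 K) :
    WittVector.truncate 2 x = E2 (x.coeff 0) (x.coeff 1) := by
  ext i
  fin_cases i <;>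
    simp [WittVector.coeff_truncate, E2, TruncatedWittVector.coeff_mk]

lemma E2_out_coeff0 (u v : K) : (E2 u v).out.coeff 0 = u :=
  (E2 u v).coeff_out (0 : Fin 2)

lemma E2_out_coeff1 (u v : K) : (E2 u v).out.coeff 1 = v :=
  (E2 u v).coeff_out (1 : Fin 2)

lemma truncate_out_eq (t : TruncatedWittVector 2 2 K) :
    WittVector.truncate 2 t.out = t := t.truncateFun_out

lemma E2_add (u v u' v' : K) :
    E2 u v + E2 u' v' = E2 (u + u') (v + v' - u * u') := by
  have h1 : WittVector.truncate 2 ((E2 u v).out + (E2 u' v').out) = E2 u v + E2 u' v' := by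
    rw [map_add, truncate_out_eq, truncate_out_eq]
  rw [← h1, truncate_eq_E2, WittVector.add_coeff_zero, PP.wv_add_coeff_one,
    E2_out_coeff0, E2_out_coeff1, E2_out_coeff0, E2_out_coeff1]

lemma E2_zero : (E2 (0:K) 0) = (0 : TruncatedWittVector 2 2 K) := by
  ext i
  fin_cases i <;> simp [E2, TruncatedWittVector.coeff_mk, TruncatedWittVector.coeff_zero]

omit [CommRing K] in
lemma E2_congr {u v u' v' : K} (h1 : u = u') (h2 : v = v') : E2 u v = E2 u' v' := by
  rw [h1, h2]

omit [CommRing K] in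
lemma E2_inj {u v u' v' : K} (h : E2 u v = E2 u' v') : u = u' ∧ v = v' := by
  constructor
  · have := congrArg (fun t : TruncatedWittVector 2 2 K => t.coeff 0) h
    simpa [E2_coeff0] using this
  · have := congrArg (fun t : TruncatedWittVector 2 2 K => t.coeff 1) h
    simpa [E2_coeff1] using this

omit [CommRing K] in
lemma E2_surj (t : TruncatedWittVector 2 2 K) : ∃ u v, t = E2 u v := by
  refine ⟨t.coeff 0, t.coeff 1, ?_⟩
  ext i
  fin_cases i <;> simp [E2, TruncatedWittVector.coeff_mk]

end E2sec

section Char2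

variable {n : ℕ}

local notation "F" => GaloisField 2 n

lemma F_add_self (a : F) : a + a = 0 := by
  have : (2 : F) = 0 := by
    have := (CharP.cast_eq_zero_iff F 2 2).2 dvd_rfl
    exact_mod_cast this
  have h2 : a + a = 2 * a := by ring
  rw [h2, this, zero_mul]

lemma E2_add2 (u v u' v' : F) :
    E2 u v + E2 u' v' = (E2 (u + u') (v + v' + u * u') : GR n) := by
  rw [E2_add]
  refine E2_congr rfl ?_
  linear_combination -F_add_self (u * u')

lemma teich_eq_E2 (x : F) : teich n x = E2 x 0 := by
  rw [teich, truncate_eq_E2]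
  simp [WittVector.teichmuller_coeff_zero, WittVector.teichmuller_coeff_pos _ _ 1 one_pos]

lemma E2_self_add (u v : F) : (E2 u v : GR n) + E2 u v = E2 0 (u * u) := by
  rw [E2_add2]
  refine E2_congr (F_add_self u) ?_
  linear_combination F_add_self v

lemma E2_neg (u v : F) : -(E2 u v : GR n) = E2 u (v + u * u) := by
  refine neg_eq_of_add_eq_zero_right ?_
  rw [E2_add2, ← E2_zero]
  refine E2_congr (F_add_self u) ?_
  linear_combination F_add_self v + F_add_self (u*u)

lemma GR_four_torsion (r : GR n) : r + r + (r + r) = 0 := by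
  obtain ⟨u, v, rfl⟩ := E2_surj r
  rw [E2_self_add, E2_self_add, ← E2_zero]
  exact E2_congr rfl (zero_mul 0)

end Char2

lemma fourth_roots (z : ℂ) (h : z ^ 4 = 1) :
    z = 1 ∨ z = -1 ∨ z = Complex.I ∨ z = -Complex.I := by
  have hI : (Complex.I : ℂ) ^ 2 = -1 := Complex.I_sq
  have h4 : (z - 1) * (z + 1) * (z - Complex.I) * (z + Complex.I) = 0 := by
    linear_combination h - (z ^ 2 - 1) * hI
  rcases mul_eq_zero.1 h4 with h' | h'
  · rcases mul_eq_zero.1 h' with h'' | h''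
    · rcases mul_eq_zero.1 h'' with h3 | h3
      · exact Or.inl (by linear_combination h3)
      · exact Or.inr (Or.inl (by linear_combination h3))
    · exact Or.inr (Or.inr (Or.inl (by linear_combination h'')))
  · exact Or.inr (Or.inr (Or.inr (by linear_combination h')))

lemma sq_add_sq_pow_two (m : ℕ) : ∀ a b : ℤ, a ^ 2 + b ^ 2 = 2 ^ (2 * m) →
    ((a = 2 ^ m ∨ a = -2 ^ m) ∧ b = 0) ∨ (a = 0 ∧ (b = 2 ^ m ∨ b = -2 ^ m)) := by
  induction m with
  | zero =>
    intro a b h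
    norm_num at h ⊢
    have ha1 : -1 ≤ a ∧ a ≤ 1 := by constructor <;> nlinarith [sq_nonneg a, sq_nonneg b]
    have hb1 : -1 ≤ b ∧ b ≤ 1 := by constructor <;> nlinarith [sq_nonneg a, sq_nonneg b]
    obtain ⟨ha2, ha3⟩ := ha1
    obtain ⟨hb2, hb3⟩ := hb1
    interval_cases a <;> interval_cases b <;> simp_all
  | succ k ih =>
    intro a b h
    rcases Int.even_or_odd a with ⟨s, hs⟩ | ⟨s, hs⟩ <;>
      rcases Int.even_or_odd b with ⟨t, ht⟩ | ⟨t, ht⟩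
    · -- both even
      subst hs; subst ht
      have h4 : 4 * (s ^ 2 + t ^ 2) = 4 * 2 ^ (2 * k) := by
        have hpow : (2:ℤ) ^ (2 * (k + 1)) = 4 * 2 ^ (2 * k) := by ring
        linear_combination h - hpow
      have h5 : s ^ 2 + t ^ 2 = 2 ^ (2 * k) := by linarith
      have hpow2 : (2:ℤ) ^ (k + 1) = 2 * 2 ^ k := by ring
      rcases ih s t h5 with ⟨hs' | hs', ht'⟩ | ⟨hs', ht' | ht'⟩
      · exact Or.inl ⟨Or.inl (by omega), by omega⟩
      · exact Or.inl ⟨Or.inr (by omega), by omega⟩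
      · exact Or.inr ⟨by omega, Or.inl (by omega)⟩
      · exact Or.inr ⟨by omega, Or.inr (by omega)⟩
    · -- a even, b odd
      exfalso
      have h' : 4 * (s ^ 2 + t ^ 2 + t) + 1 = 4 * 2 ^ (2 * k) := by
        have hpow : (2:ℤ) ^ (2 * (k + 1)) = 4 * 2 ^ (2 * k) := by ring
        rw [hs, ht] at h
        linear_combination h - hpow
      generalize s ^ 2 + t ^ 2 + t = u at h'
      generalize (2:ℤ) ^ (2*k) = w at h'
      omega
    · -- a odd, b even
      exfalso
      have h' : 4 * (s ^ 2 + s + t ^ 2) + 1 = 4 * 2 ^ (2 * k) := by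
        have hpow : (2:ℤ) ^ (2 * (k + 1)) = 4 * 2 ^ (2 * k) := by ring
        rw [hs, ht] at h
        linear_combination h - hpow
      generalize s ^ 2 + s + t ^ 2 = u at h'
      generalize (2:ℤ) ^ (2*k) = w at h'
      omega
    · -- both odd
      exfalso
      have h' : 4 * (s ^ 2 + s + t ^ 2 + t) + 2 = 4 * 2 ^ (2 * k) := by
        have hpow : (2:ℤ) ^ (2 * (k + 1)) = 4 * 2 ^ (2 * k) := by ring
        rw [hs, ht] at h
        linear_combination h - hpow
      generalize s ^ 2 + s + t ^ 2 + t = u at h'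
      generalize (2:ℤ) ^ (2*k) = w at h'
      omega

end PP

open Complex in
set_option maxHeartbeats 4000000 in
/-- **Corollary (Fourier spectrum, `n` even).** Let `n` be even and positive, `f`
pseudo-planar on `F = 𝔽_{2^n}` with `f(0) = 0`, `b = 2^((n−2)/2)`, and for each additive
character `χ : (R,+) → ℂ` of the Galois ring `R = W₂(F)` let
`W_f(χ) = ∑_x χ(τ(x) + 2τ(f(x)^(2^(n−1))))`. Then the value `4b²` occurs once, `0` occurs
`4b² − 1` times, `2b` occurs `b(4b³+4b²−b−1)` times, `−2b` occurs `b(4b³−4b²−b+1)` times,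
and each of `±2b·i` occurs `b²(4b²−1)` times. -/
theorem fourier_spectrum_even
    (n : ℕ) (hn : 0 < n) (heven : Even n)
    (f : GaloisField 2 n → GaloisField 2 n)
    (hpp : ∀ ε : GaloisField 2 n, ε ≠ 0 →
      Function.Bijective (fun x => f (x + ε) + f x + ε * x))
    (hf0 : f 0 = 0)
    (b : ℕ) (hb : b = 2 ^ ((n - 2) / 2))
    (W : AddChar (GR n) ℂ → ℂ)
    (hW : ∀ χ : AddChar (GR n) ℂ,
      W χ = ∑ᶠ x : GaloisField 2 n, χ (teich n x + 2 * teich n (f x ^ 2 ^ (n - 1)))) :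
    Nat.card {χ : AddChar (GR n) ℂ // W χ = 4 * (b : ℂ) ^ 2} = 1 ∧
    (Nat.card {χ : AddChar (GR n) ℂ // W χ = 0} : ℚ) = 4 * (b : ℚ) ^ 2 - 1 ∧
    (Nat.card {χ : AddChar (GR n) ℂ // W χ = 2 * (b : ℂ)} : ℚ) =
      (b : ℚ) * (4 * (b : ℚ) ^ 3 + 4 * (b : ℚ) ^ 2 - (b : ℚ) - 1) ∧
    (Nat.card {χ : AddChar (GR n) ℂ // W χ = -(2 * (b : ℂ))} : ℚ) =
      (b : ℚ) * (4 * (b : ℚ) ^ 3 - 4 * (b : ℚ) ^ 2 - (b : ℚ) + 1) ∧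
    (Nat.card {χ : AddChar (GR n) ℂ // W χ = 2 * (b : ℂ) * I} : ℚ) =
      (b : ℚ) ^ 2 * (4 * (b : ℚ) ^ 2 - 1) ∧
    (Nat.card {χ : AddChar (GR n) ℂ // W χ = -(2 * (b : ℂ) * I)} : ℚ) =
      (b : ℚ) ^ 2 * (4 * (b : ℚ) ^ 2 - 1) := by
  classical
  letI instF : Fintype (GaloisField 2 n) := Fintype.ofFinite _
  obtain ⟨m, hm⟩ := heven
  have hm1 : 1 ≤ m := by omega
  have hFcard : Fintype.card (GaloisField 2 n) = 2 ^ (m + m) := by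
    rw [← Nat.card_eq_fintype_card, GaloisField.card 2 n hn.ne', hm]
  have hRcard : Fintype.card (GR n) = 2 ^ (m + m) * 2 ^ (m + m) := by
    rw [TruncatedWittVector.card, hFcard]; ring
  set d : GaloisField 2 n → GR n := fun x => PP.E2 x (f x) with hd_def
  have hd : ∀ x, teich n x + 2 * teich n (f x ^ 2 ^ (n - 1)) = d x := by
    intro x
    have hpow : f x ^ 2 ^ (n - 1) * f x ^ 2 ^ (n - 1) = f x := by
      rw [← pow_add]
      have h1 : 2 ^ (n - 1) + 2 ^ (n - 1) = 2 ^ n := by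
        have h2 : n - 1 + 1 = n := Nat.succ_pred_eq_of_pos hn
        conv_rhs => rw [← h2, pow_succ]
        ring
      have hFcard' : Fintype.card (GaloisField 2 n) = 2 ^ n := by rw [hFcard, hm]
      rw [h1, ← hFcard']
      exact FiniteField.pow_card (f x)
    rw [two_mul, PP.teich_eq_E2, PP.teich_eq_E2, PP.E2_self_add, PP.E2_add2]
    exact PP.E2_congr (by ring) (by rw [hpow]; ring)
  have hS : ∀ χ : AddChar (GR n) ℂ, W χ = ∑ x : GaloisField 2 n, χ (d x) := by
    intro χ
    rw [hW χ]
    rw [show (fun x : GaloisField 2 n => χ (teich n x + 2 * teich n (f x ^ 2 ^ (n - 1))))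
        = fun x => χ (d x) from funext fun x => by rw [hd x]]
    exact finsum_eq_sum_of_fintype _
  have hdz : ∀ x, d x = 0 ↔ x = 0 := by
    intro x
    constructor
    · intro h
      rw [hd_def] at h
      simp only at h
      rw [← PP.E2_zero] at h
      exact (PP.E2_inj h).1
    · rintro rfl
      rw [hd_def]
      simp only [hf0]
      exact PP.E2_zero
  have hpair : ∀ x y : GaloisField 2 n, d x + d y = 0 ↔ (x = 0 ∧ y = 0) := by
    intro x y
    constructor
    · intro h
      rw [hd_def] at h
      simp only at h
      rw [PP.E2_add2, ← PP.E2_zero] at h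
      obtain ⟨h1, h2⟩ := PP.E2_inj h
      have hxy : x = y := by
        have := PP.F_add_self y
        linear_combination h1 - this
      subst hxy
      have hx2 : x * x = 0 := by
        have := PP.F_add_self (f x)
        linear_combination h2 - this
      have : x = 0 := by
        rcases mul_eq_zero.1 hx2 with h | h <;> exact h
      exact ⟨this, this⟩
    · rintro ⟨rfl, rfl⟩
      rw [hd_def]
      simp only [hf0]
      rw [PP.E2_add2, ← PP.E2_zero]
      exact PP.E2_congr (by ring) (by ring)
  -- the subgroup 2R, via the additive hom v ↦ E2 0 v
  set h2R : GaloisField 2 n →+ GR n :=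
    AddMonoidHom.mk' (fun v => PP.E2 0 v) (by
      intro a c
      rw [PP.E2_add2]
      exact PP.E2_congr (by ring) (by ring)) with h2R_def
  set ψ : AddChar (GR n) ℂ → AddChar (GaloisField 2 n) ℂ :=
    fun χ => χ.compAddMonoidHom h2R with hψ_def
  have hψap : ∀ (χ : AddChar (GR n) ℂ) (v : GaloisField 2 n), ψ χ v = χ (PP.E2 0 v) := by
    intro χ v; rfl
  have hψ0 : ψ 0 = 0 := by
    ext v
    rw [hψap]
    simp
  have hortho : ∀ r : GR n, ∑ χ : AddChar (GR n) ℂ, χ r =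
      if r = 0 then ((2 ^ (m + m) * 2 ^ (m + m) : ℕ) : ℂ) else 0 := by
    intro r; rw [AddChar.sum_apply_eq_ite, hRcard]
  have hchi_sum : ∀ χ : AddChar (GR n) ℂ, ∑ r : GR n, χ r =
      if χ = 0 then ((2 ^ (m + m) * 2 ^ (m + m) : ℕ) : ℂ) else 0 := by
    intro χ; rw [AddChar.sum_eq_ite, hRcard]
  have hBsum : ∀ χ : AddChar (GR n) ℂ, ∑ v : GaloisField 2 n, χ (PP.E2 0 v) =
      if ψ χ = 0 then ((2 ^ (m + m) : ℕ) : ℂ) else 0 := by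
    intro χ
    have h := AddChar.sum_eq_ite (ψ χ)
    rw [hFcard] at h
    rw [← h]
    exact Finset.sum_congr rfl fun v _ => (hψap χ v).symm
  have hEbij : Function.Bijective
      (fun p : GaloisField 2 n × GaloisField 2 n => PP.E2 p.1 p.2) := by
    constructor
    · rintro ⟨u, v⟩ ⟨u', v'⟩ h
      obtain ⟨h1, h2⟩ := PP.E2_inj h
      exact Prod.ext h1 h2
    · intro t
      obtain ⟨u, v, ht⟩ := PP.E2_surj t
      exact ⟨(u, v), ht.symm⟩
  have hEz : ∀ v : GaloisField 2 n, PP.E2 0 v = 0 ↔ v = 0 := by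
    intro v
    constructor
    · intro h; rw [← PP.E2_zero] at h; exact (PP.E2_inj h).2
    · rintro rfl; exact PP.E2_zero
  have hRsum : ∀ χ : AddChar (GR n) ℂ,
      ∑ ε : GaloisField 2 n, ∑ v : GaloisField 2 n, χ (PP.E2 ε v)
        = if χ = 0 then ((2 ^ (m + m) * 2 ^ (m + m) : ℕ) : ℂ) else 0 := by
    intro χ
    calc ∑ ε : GaloisField 2 n, ∑ v : GaloisField 2 n, χ (PP.E2 ε v)
        = ∑ p : GaloisField 2 n × GaloisField 2 n, χ (PP.E2 p.1 p.2) :=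
          (Fintype.sum_prod_type (f := fun p : GaloisField 2 n × GaloisField 2 n =>
            χ (PP.E2 p.1 p.2))).symm
      _ = ∑ r : GR n, χ r :=
          Fintype.sum_bijective _ hEbij _ (fun r => χ r) (fun p => rfl)
      _ = _ := hchi_sum χ
  have hsum1 : ∑ χ : AddChar (GR n) ℂ, W χ = ((2 ^ (m + m) * 2 ^ (m + m) : ℕ) : ℂ) := by
    calc ∑ χ : AddChar (GR n) ℂ, W χ = ∑ χ : AddChar (GR n) ℂ, ∑ x, χ (d x) :=
          Finset.sum_congr rfl fun χ _ => hS χ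
      _ = ∑ x, ∑ χ : AddChar (GR n) ℂ, χ (d x) := Finset.sum_comm
      _ = ∑ x : GaloisField 2 n, if d x = 0 then ((2 ^ (m + m) * 2 ^ (m + m) : ℕ) : ℂ) else 0 :=
          Finset.sum_congr rfl fun x _ => hortho (d x)
      _ = ∑ x : GaloisField 2 n, if x = 0 then ((2 ^ (m + m) * 2 ^ (m + m) : ℕ) : ℂ) else 0 :=
          Finset.sum_congr rfl fun x _ => if_congr (hdz x) rfl rfl
      _ = ((2 ^ (m + m) * 2 ^ (m + m) : ℕ) : ℂ) := by simp
  have hsum2 : ∑ χ : AddChar (GR n) ℂ, (W χ) ^ 2 = ((2 ^ (m + m) * 2 ^ (m + m) : ℕ) : ℂ) := by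
    have hsq : ∀ χ : AddChar (GR n) ℂ,
        (W χ) ^ 2 = ∑ p : GaloisField 2 n × GaloisField 2 n, χ (d p.1 + d p.2) := by
      intro χ
      rw [hS, sq, Finset.sum_mul_sum]
      calc ∑ x : GaloisField 2 n, ∑ y : GaloisField 2 n, χ (d x) * χ (d y)
          = ∑ p : GaloisField 2 n × GaloisField 2 n, χ (d p.1) * χ (d p.2) :=
            (Fintype.sum_prod_type (f := fun p : GaloisField 2 n × GaloisField 2 n =>
              χ (d p.1) * χ (d p.2))).symm
        _ = ∑ p : GaloisField 2 n × GaloisField 2 n, χ (d p.1 + d p.2) :=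
            Finset.sum_congr rfl fun p _ => (AddChar.map_add_eq_mul χ _ _).symm
    calc ∑ χ : AddChar (GR n) ℂ, (W χ) ^ 2
        = ∑ χ : AddChar (GR n) ℂ, ∑ p : GaloisField 2 n × GaloisField 2 n, χ (d p.1 + d p.2) :=
          Finset.sum_congr rfl fun χ _ => hsq χ
      _ = ∑ p : GaloisField 2 n × GaloisField 2 n, ∑ χ : AddChar (GR n) ℂ, χ (d p.1 + d p.2) :=
          Finset.sum_comm
      _ = ∑ p : GaloisField 2 n × GaloisField 2 n,
            if d p.1 + d p.2 = 0 then ((2 ^ (m + m) * 2 ^ (m + m) : ℕ) : ℂ) else 0 :=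
          Finset.sum_congr rfl fun p _ => hortho _
      _ = ∑ p : GaloisField 2 n × GaloisField 2 n,
            if p = (0, 0) then ((2 ^ (m + m) * 2 ^ (m + m) : ℕ) : ℂ) else 0 := by
          refine Finset.sum_congr rfl fun p _ => if_congr ?_ rfl rfl
          rw [hpair, Prod.ext_iff]
      _ = ((2 ^ (m + m) * 2 ^ (m + m) : ℕ) : ℂ) := by simp
  have hpsi_card :
      ((Finset.univ.filter (fun χ : AddChar (GR n) ℂ => ψ χ = 0)).card : ℕ) = 2 ^ (m + m) := by
    have h1 : ∑ χ : AddChar (GR n) ℂ, (if ψ χ = 0 then ((2 ^ (m + m) : ℕ) : ℂ) else 0)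
        = ((2 ^ (m + m) * 2 ^ (m + m) : ℕ) : ℂ) := by
      calc ∑ χ : AddChar (GR n) ℂ, (if ψ χ = 0 then ((2 ^ (m + m) : ℕ) : ℂ) else 0)
          = ∑ χ : AddChar (GR n) ℂ, ∑ v : GaloisField 2 n, χ (PP.E2 0 v) :=
            Finset.sum_congr rfl fun χ _ => (hBsum χ).symm
        _ = ∑ v : GaloisField 2 n, ∑ χ : AddChar (GR n) ℂ, χ (PP.E2 0 v) := Finset.sum_comm
        _ = ∑ v : GaloisField 2 n,
              if PP.E2 0 v = 0 then ((2 ^ (m + m) * 2 ^ (m + m) : ℕ) : ℂ) else 0 :=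
            Finset.sum_congr rfl fun v _ => hortho _
        _ = ∑ v : GaloisField 2 n,
              if v = 0 then ((2 ^ (m + m) * 2 ^ (m + m) : ℕ) : ℂ) else 0 :=
            Finset.sum_congr rfl fun v _ => if_congr (hEz v) rfl rfl
        _ = _ := by simp
    rw [← Finset.sum_filter, Finset.sum_const, nsmul_eq_mul] at h1
    have h2 : ((2 ^ (m + m) : ℕ) : ℂ) ≠ 0 := by
      simp [pow_ne_zero]
    have h3 : (((Finset.univ.filter (fun χ : AddChar (GR n) ℂ => ψ χ = 0)).card : ℂ))
        = ((2 ^ (m + m) : ℕ) : ℂ) := by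
      apply mul_right_cancel₀ h2
      rw [h1]
      push_cast
      ring
    exact_mod_cast h3
  have hT : ∀ χ : AddChar (GR n) ℂ, W χ * (starRingEnd ℂ) (W χ)
      = ((2 ^ (m + m) : ℕ) : ℂ)
        + (if χ = 0 then ((2 ^ (m + m) * 2 ^ (m + m) : ℕ) : ℂ) else 0)
        - (if ψ χ = 0 then ((2 ^ (m + m) : ℕ) : ℂ) else 0) := by
    intro χ
    have hconj : (starRingEnd ℂ) (W χ) = ∑ y : GaloisField 2 n, χ (-(d y)) := by
      rw [hS, map_sum]
      exact Finset.sum_congr rfl fun y _ => (AddChar.map_neg_eq_conj χ (d y)).symm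
    have hval : ∀ y ε : GaloisField 2 n,
        d (y + ε) + -(d y) = PP.E2 ε (f (y + ε) + f y + ε * y) := by
      intro y ε
      rw [hd_def]
      simp only
      rw [PP.E2_neg, PP.E2_add2]
      refine PP.E2_congr ?_ ?_
      · linear_combination PP.F_add_self y
      · linear_combination PP.F_add_self (y * y)
    have hinner : ∀ ε : GaloisField 2 n,
        ∑ y : GaloisField 2 n, χ (PP.E2 ε (f (y + ε) + f y + ε * y))
          = if ε = 0 then ((2 ^ (m + m) : ℕ) : ℂ)
            else ∑ c : GaloisField 2 n, χ (PP.E2 ε c) := by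
      intro ε
      by_cases hε : ε = 0
      · subst hε
        rw [if_pos rfl]
        have : ∀ y : GaloisField 2 n, χ (PP.E2 0 (f (y + 0) + f y + 0 * y)) = 1 := by
          intro y
          rw [show f (y + 0) + f y + 0 * y = (0 : GaloisField 2 n) by
            rw [add_zero, zero_mul, add_zero]; exact PP.F_add_self (f y)]
          rw [PP.E2_zero]
          exact χ.map_zero_eq_one
        rw [Finset.sum_congr rfl fun y _ => this y, Finset.sum_const, Finset.card_univ, hFcard,
          nsmul_eq_mul, mul_one]
      · rw [if_neg hε]
        exact Fintype.sum_bijective _ (hpp ε hε) _ _ (fun y => rfl)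
    calc W χ * (starRingEnd ℂ) (W χ)
        = ∑ x : GaloisField 2 n, ∑ y : GaloisField 2 n, χ (d x) * χ (-(d y)) := by
          rw [hconj, hS, Finset.sum_mul_sum]
      _ = ∑ x : GaloisField 2 n, ∑ y : GaloisField 2 n, χ (d x + -(d y)) :=
          Finset.sum_congr rfl fun x _ => Finset.sum_congr rfl fun y _ =>
            (AddChar.map_add_eq_mul χ _ _).symm
      _ = ∑ y : GaloisField 2 n, ∑ x : GaloisField 2 n, χ (d x + -(d y)) := Finset.sum_comm
      _ = ∑ y : GaloisField 2 n, ∑ ε : GaloisField 2 n, χ (d (y + ε) + -(d y)) :=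
          Finset.sum_congr rfl fun y _ =>
            (Fintype.sum_equiv (Equiv.addLeft y) _ _ (fun ε => rfl)).symm
      _ = ∑ y : GaloisField 2 n, ∑ ε : GaloisField 2 n,
            χ (PP.E2 ε (f (y + ε) + f y + ε * y)) :=
          Finset.sum_congr rfl fun y _ => Finset.sum_congr rfl fun ε _ => by rw [hval y ε]
      _ = ∑ ε : GaloisField 2 n, ∑ y : GaloisField 2 n,
            χ (PP.E2 ε (f (y + ε) + f y + ε * y)) := Finset.sum_comm
      _ = ∑ ε : GaloisField 2 n, (if ε = 0 then ((2 ^ (m + m) : ℕ) : ℂ)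
            else ∑ c : GaloisField 2 n, χ (PP.E2 ε c)) :=
          Finset.sum_congr rfl fun ε _ => hinner ε
      _ = ((2 ^ (m + m) : ℕ) : ℂ)
            + (if χ = 0 then ((2 ^ (m + m) * 2 ^ (m + m) : ℕ) : ℂ) else 0)
            - (if ψ χ = 0 then ((2 ^ (m + m) : ℕ) : ℂ) else 0) := by
          set A : ℂ := ((2 ^ (m + m) : ℕ) : ℂ) with hA
          set h' : GaloisField 2 n → ℂ := fun ε => ∑ c : GaloisField 2 n, χ (PP.E2 ε c)
            with hh'
          have e1 : ∑ ε : GaloisField 2 n, (if ε = 0 then A else h' ε)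
              = A + ∑ ε ∈ Finset.univ.erase 0, h' ε := by
            rw [← Finset.add_sum_erase _ _ (Finset.mem_univ (0 : GaloisField 2 n)), if_pos rfl]
            congr 1
            exact Finset.sum_congr rfl fun ε hε =>
              if_neg (Finset.ne_of_mem_erase hε)
          have e2 : h' 0 + ∑ ε ∈ Finset.univ.erase 0, h' ε = ∑ ε : GaloisField 2 n, h' ε :=
            Finset.add_sum_erase _ _ (Finset.mem_univ (0 : GaloisField 2 n))
          have e3 : ∑ ε : GaloisField 2 n, h' ε
              = if χ = 0 then ((2 ^ (m + m) * 2 ^ (m + m) : ℕ) : ℂ) else 0 := hRsum χ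
          have e4 : h' 0 = if ψ χ = 0 then A else 0 := hBsum χ
          rw [e1]
          have e5 : ∑ ε ∈ Finset.univ.erase 0, h' ε
              = (if χ = 0 then ((2 ^ (m + m) * 2 ^ (m + m) : ℕ) : ℂ) else 0)
                - (if ψ χ = 0 then A else 0) := by
            rw [← e3, ← e4]
            linear_combination e2
          rw [e5]
          ring
  have hgauss : ∀ χ : AddChar (GR n) ℂ, ψ χ ≠ 0 →
      (W χ = (2:ℂ)^m ∨ W χ = -(2:ℂ)^m ∨ W χ = (2:ℂ)^m * I ∨ W χ = -((2:ℂ)^m * I)) := by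
    intro χ hψχ
    have hχ0 : χ ≠ 0 := fun h => hψχ (by rw [h, hψ0])
    have hT' : W χ * (starRingEnd ℂ) (W χ) = ((2 ^ (m + m) : ℕ) : ℂ) := by
      rw [hT χ, if_neg hχ0, if_neg hψχ]
      ring
    have hint : ∃ a c : ℤ, W χ = (a : ℂ) + (c : ℂ) * I := by
      rw [hS]
      refine Finset.sum_induction _ (fun z : ℂ => ∃ a c : ℤ, z = (a:ℂ) + (c:ℂ) * I)
        (fun z w hz hw => ?_) ⟨0, 0, by simp⟩ ?_
      · obtain ⟨a, c, hz⟩ := hz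
        obtain ⟨a', c', hw⟩ := hw
        exact ⟨a + a', c + c', by rw [hz, hw]; push_cast; ring⟩
      · intro x _
        have h4 : (χ (d x)) ^ 4 = 1 := by
          have h1 : χ (d x + d x + (d x + d x)) = 1 := by
            rw [PP.GR_four_torsion (d x)]
            exact χ.map_zero_eq_one
          rw [AddChar.map_add_eq_mul, AddChar.map_add_eq_mul] at h1
          rw [← h1]; ring
        rcases PP.fourth_roots _ h4 with h | h | h | h
        · exact ⟨1, 0, by rw [h]; simp⟩
        · exact ⟨-1, 0, by rw [h]; push_cast; ring⟩
        · exact ⟨0, 1, by rw [h]; simp⟩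
        · exact ⟨0, -1, by rw [h]; push_cast; ring⟩
    obtain ⟨a, c, hac⟩ := hint
    have hz : W χ = (((a:ℝ)):ℂ) + (((c:ℝ)):ℂ) * I := by rw [hac]; push_cast; ring
    have hnormC : W χ * (starRingEnd ℂ) (W χ) = (((a:ℝ)^2 + (c:ℝ)^2 : ℝ) : ℂ) := by
      rw [hz, Complex.mul_conj, Complex.normSq_add_mul_I]
    have hnormR : (a:ℝ)^2 + (c:ℝ)^2 = (2 ^ (m + m) : ℕ) := by
      have := hnormC.symm.trans hT'
      exact_mod_cast this
    have hint2 : a^2 + c^2 = 2^(2*m) := by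
      have : a^2 + c^2 = (2:ℤ)^(m+m) := by exact_mod_cast hnormR
      rw [this, two_mul]
    rcases PP.sq_add_sq_pow_two m a c hint2 with ⟨ha | ha, hc⟩ | ⟨ha, hc | hc⟩
    · left; rw [hac, ha, hc]; push_cast; ring
    · right; left; rw [hac, ha, hc]; push_cast; ring
    · right; right; left; rw [hac, ha, hc]; push_cast; ring
    · right; right; right; rw [hac, ha, hc]; push_cast; ring
  -- Stage 6: counting
  set c : ℂ := (2:ℂ)^m with hc_def
  set x : ℝ := (2:ℝ)^m with hx_def
  have hx1 : (1:ℝ) < x := by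
    rw [hx_def]
    exact one_lt_pow₀ one_lt_two (by omega)
  have hc_eq : c = ((x:ℝ):ℂ) := by rw [hc_def, hx_def]; push_cast; ring
  have hkey : ∀ u v u' v' : ℝ, ((u:ℂ) + (v:ℂ)*I = (u':ℂ) + (v':ℂ)*I) ↔ (u = u' ∧ v = v') := by
    intro u v u' v'
    constructor
    · intro h
      have h1 := congrArg Complex.re h
      have h2 := congrArg Complex.im h
      simp at h1 h2
      exact ⟨h1, h2⟩
    · rintro ⟨rfl, rfl⟩; rfl
  -- canonical forms
  have ec2 : c^2 = ((x^2:ℝ):ℂ) + ((0:ℝ):ℂ)*I := by rw [hc_eq]; push_cast; ring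
  have ec : c = ((x:ℝ):ℂ) + ((0:ℝ):ℂ)*I := by rw [hc_eq]; push_cast; ring
  have enc : -c = ((-x:ℝ):ℂ) + ((0:ℝ):ℂ)*I := by rw [hc_eq]; push_cast; ring
  have eci : c*I = ((0:ℝ):ℂ) + ((x:ℝ):ℂ)*I := by rw [hc_eq]; push_cast; ring
  have enci : -(c*I) = ((0:ℝ):ℂ) + ((-x:ℝ):ℂ)*I := by rw [hc_eq]; push_cast; ring
  have e0 : (0:ℂ) = ((0:ℝ):ℂ) + ((0:ℝ):ℂ)*I := by push_cast; ring
  -- distinctness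
  have ne_c2_0 : c^2 ≠ 0 := by
    rw [ec2, e0, Ne, hkey]; intro h; nlinarith [h.1]
  have ne_c2_c : c^2 ≠ c := by
    rw [ec2, ec, Ne, hkey]; intro h; nlinarith [h.1]
  have ne_c2_nc : c^2 ≠ -c := by
    rw [ec2, enc, Ne, hkey]; intro h; nlinarith [h.1]
  have ne_c2_ci : c^2 ≠ c*I := by
    rw [ec2, eci, Ne, hkey]; intro h; nlinarith [h.1]
  have ne_c2_nci : c^2 ≠ -(c*I) := by
    rw [ec2, enci, Ne, hkey]; intro h; nlinarith [h.1]
  have ne_c_0 : c ≠ 0 := by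
    rw [ec, e0, Ne, hkey]; intro h; nlinarith [h.1]
  have ne_nc_0 : -c ≠ 0 := by
    rw [enc, e0, Ne, hkey]; intro h; nlinarith [h.1]
  have ne_ci_0 : c*I ≠ 0 := by
    rw [eci, e0, Ne, hkey]; intro h; nlinarith [h.2]
  have ne_nci_0 : -(c*I) ≠ 0 := by
    rw [enci, e0, Ne, hkey]; intro h; nlinarith [h.2]
  have ne_c_nc : c ≠ -c := by
    rw [enc, ec, Ne, hkey]; intro h; nlinarith [h.1]
  have ne_c_ci : c ≠ c*I := by
    rw [eci, ec, Ne, hkey]; intro h; nlinarith [h.1]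
  have ne_c_nci : c ≠ -(c*I) := by
    rw [enci, ec, Ne, hkey]; intro h; nlinarith [h.1]
  have ne_nc_ci : -c ≠ c*I := by
    rw [enc, eci, Ne, hkey]; intro h; nlinarith [h.1]
  have ne_nc_nci : -c ≠ -(c*I) := by
    rw [enc, enci, Ne, hkey]; intro h; nlinarith [h.1]
  have ne_ci_nci : c*I ≠ -(c*I) := by
    rw [enci, eci, Ne, hkey]; intro h; nlinarith [h.2]
  -- value of the trivial character
  have hW0 : W 0 = c^2 := by
    rw [hS]
    have : ∀ x : GaloisField 2 n, (0 : AddChar (GR n) ℂ) (d x) = 1 := fun x => rfl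
    rw [Finset.sum_congr rfl fun y _ => this y, Finset.sum_const, Finset.card_univ, hFcard,
      nsmul_eq_mul, mul_one, hc_def]
    push_cast
    rw [pow_add]
    ring
  have hcast_q : ((2 ^ (m + m) : ℕ) : ℂ) = c^2 := by
    rw [hc_def]; push_cast; rw [pow_add]; ring
  have hcast_Q : ((2 ^ (m + m) * 2 ^ (m + m) : ℕ) : ℂ) = c^4 := by
    rw [hc_def]; push_cast; rw [pow_add]; ring
  -- the vanishing class
  have ht2 : ∀ χ : AddChar (GR n) ℂ, χ ≠ 0 → ψ χ = 0 → W χ = 0 := by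
    intro χ h1 h2
    have h3 := hT χ
    rw [if_neg h1, if_pos h2] at h3
    have h4 : W χ * (starRingEnd ℂ) (W χ) = 0 := by rw [h3]; ring
    rcases mul_eq_zero.1 h4 with h | h
    · exact h
    · exact (starRingEnd ℂ).injective (by simpa using h)
  -- class set identities
  set flt : ℂ → Finset (AddChar (GR n) ℂ) :=
    fun v => Finset.univ.filter (fun χ => W χ = v) with hflt_def
  have hmem : ∀ (v : ℂ) (χ : AddChar (GR n) ℂ), χ ∈ flt v ↔ W χ = v := by
    intro v χ; rw [hflt_def]; simp
  have h_f1 : flt (c^2) = {0} := by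
    ext χ
    rw [hmem, Finset.mem_singleton]
    constructor
    · intro hWχ
      by_contra hχ
      by_cases hψχ : ψ χ = 0
      · exact ne_c2_0 (hWχ.symm.trans (ht2 χ hχ hψχ))
      · rcases hgauss χ hψχ with h | h | h | h
        · exact ne_c2_c (hWχ.symm.trans h)
        · exact ne_c2_nc (hWχ.symm.trans h)
        · exact ne_c2_ci (hWχ.symm.trans h)
        · exact ne_c2_nci (hWχ.symm.trans h)
    · rintro rfl; exact hW0
  have h0_notin : (0 : AddChar (GR n) ℂ) ∉ flt 0 := by
    intro h
    exact ne_c2_0 (hW0.symm.trans ((hmem 0 0).1 h))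
  have h_psi_filter : Finset.univ.filter (fun χ : AddChar (GR n) ℂ => ψ χ = 0)
      = insert 0 (flt 0) := by
    ext χ
    simp only [Finset.mem_filter, Finset.mem_univ, true_and, Finset.mem_insert, hmem]
    constructor
    · intro hψχ
      by_cases hχ : χ = 0
      · exact Or.inl hχ
      · exact Or.inr (ht2 χ hχ hψχ)
    · rintro (rfl | hWχ)
      · exact hψ0
      · by_contra hψχ
        rcases hgauss χ hψχ with h | h | h | h
        · exact ne_c_0 (h.symm.trans hWχ)
        · exact ne_nc_0 (h.symm.trans hWχ)
        · exact ne_ci_0 (h.symm.trans hWχ)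
        · exact ne_nci_0 (h.symm.trans hWχ)
  have hN2 : (flt 0).card + 1 = 2 ^ (m + m) := by
    rw [← hpsi_card, h_psi_filter, Finset.card_insert_of_notMem h0_notin]
  have h_U : Finset.univ.filter (fun χ : AddChar (GR n) ℂ => ¬ (ψ χ = 0))
      = ((flt c ∪ flt (-c)) ∪ flt (c*I)) ∪ flt (-(c*I)) := by
    ext χ
    simp only [Finset.mem_filter, Finset.mem_univ, true_and, Finset.mem_union, hmem]
    constructor
    · intro hψχ
      rcases hgauss χ hψχ with h | h | h | h
      · exact Or.inl (Or.inl (Or.inl h))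
      · exact Or.inl (Or.inl (Or.inr h))
      · exact Or.inl (Or.inr h)
      · exact Or.inr h
    · intro hval hψχ
      by_cases hχ : χ = 0
      · subst hχ
        rcases hval with ((h | h) | h) | h
        · exact ne_c2_c (hW0.symm.trans h)
        · exact ne_c2_nc (hW0.symm.trans h)
        · exact ne_c2_ci (hW0.symm.trans h)
        · exact ne_c2_nci (hW0.symm.trans h)
      · have h0 := ht2 χ hχ hψχ
        rcases hval with ((h | h) | h) | h
        · exact ne_c_0 (h.symm.trans h0)
        · exact ne_nc_0 (h.symm.trans h0)
        · exact ne_ci_0 (h.symm.trans h0)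
        · exact ne_nci_0 (h.symm.trans h0)
  have hdisjf : ∀ v w : ℂ, v ≠ w → Disjoint (flt v) (flt w) := by
    intro v w hvw
    rw [Finset.disjoint_left]
    intro χ h1 h2
    exact hvw (((hmem v χ).1 h1).symm.trans ((hmem w χ).1 h2))
  have hd12 : Disjoint (flt c) (flt (-c)) := hdisjf _ _ ne_c_nc
  have hd123 : Disjoint (flt c ∪ flt (-c)) (flt (c*I)) :=
    Finset.disjoint_union_left.2 ⟨hdisjf _ _ ne_c_ci, hdisjf _ _ ne_nc_ci⟩
  have hd1234 : Disjoint ((flt c ∪ flt (-c)) ∪ flt (c*I)) (flt (-(c*I))) :=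
    Finset.disjoint_union_left.2 ⟨Finset.disjoint_union_left.2
      ⟨hdisjf _ _ ne_c_nci, hdisjf _ _ ne_nc_nci⟩, hdisjf _ _ ne_ci_nci⟩
  have hcardU : (((flt c ∪ flt (-c)) ∪ flt (c*I)) ∪ flt (-(c*I))).card
      = (flt c).card + (flt (-c)).card + (flt (c*I)).card + (flt (-(c*I))).card := by
    rw [Finset.card_union_of_disjoint hd1234, Finset.card_union_of_disjoint hd123,
      Finset.card_union_of_disjoint hd12]
  have hcard_univ : (Finset.univ : Finset (AddChar (GR n) ℂ)).card
      = 2 ^ (m + m) * 2 ^ (m + m) := by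
    rw [Finset.card_univ, AddChar.card_eq, hRcard]
  have hE1 : (flt c).card + (flt (-c)).card + (flt (c*I)).card + (flt (-(c*I))).card
      + 2 ^ (m + m) = 2 ^ (m + m) * 2 ^ (m + m) := by
    have h := Finset.card_filter_add_card_filter_not
      (s := (Finset.univ : Finset (AddChar (GR n) ℂ))) (p := fun χ => ψ χ = 0)
    rw [hpsi_card, h_U, hcardU, hcard_univ] at h
    omega
  have hsum_dec : ∀ g : ℂ → ℂ, g 0 = 0 →
      ∑ χ : AddChar (GR n) ℂ, g (W χ)
        = g (c^2) + (((flt c).card : ℂ) * g c + ((flt (-c)).card : ℂ) * g (-c)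
            + ((flt (c*I)).card : ℂ) * g (c*I) + ((flt (-(c*I))).card : ℂ) * g (-(c*I))) := by
    intro g hg0
    have hflt_sum : ∀ v : ℂ, ∑ χ ∈ flt v, g (W χ) = ((flt v).card : ℂ) * g v := by
      intro v
      rw [Finset.sum_congr rfl (fun χ hχ => by rw [(hmem v χ).1 hχ]), Finset.sum_const,
        nsmul_eq_mul]
    calc ∑ χ : AddChar (GR n) ℂ, g (W χ)
        = ∑ χ ∈ Finset.univ.filter (fun χ => ψ χ = 0), g (W χ)
          + ∑ χ ∈ Finset.univ.filter (fun χ => ¬ (ψ χ = 0)), g (W χ) :=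
          (Finset.sum_filter_add_sum_filter_not _ _ _).symm
      _ = (g (c^2) + ∑ χ ∈ flt 0, g (W χ))
          + (((∑ χ ∈ flt c, g (W χ)) + ∑ χ ∈ flt (-c), g (W χ))
            + ∑ χ ∈ flt (c*I), g (W χ)) + ∑ χ ∈ flt (-(c*I)), g (W χ) := by
          rw [h_psi_filter, Finset.sum_insert h0_notin, hW0, h_U,
            Finset.sum_union hd1234, Finset.sum_union hd123, Finset.sum_union hd12]
          ring
      _ = _ := by
          rw [hflt_sum, hflt_sum, hflt_sum, hflt_sum, hflt_sum, hg0]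
          ring
  have eqA := (hsum_dec (fun z => z) rfl).symm.trans hsum1
  have eqB := (hsum_dec (fun z => z^2) (by norm_num)).symm.trans hsum2
  rw [hcast_Q] at eqA eqB
  replace eqA : c^2 + (((flt c).card : ℂ) * c + ((flt (-c)).card : ℂ) * (-c)
      + ((flt (c*I)).card : ℂ) * (c*I) + ((flt (-(c*I))).card : ℂ) * (-(c*I))) = c^4 := eqA
  replace eqB : (c^2)^2 + (((flt c).card : ℂ) * c^2 + ((flt (-c)).card : ℂ) * (-c)^2
      + ((flt (c*I)).card : ℂ) * (c*I)^2 + ((flt (-(c*I))).card : ℂ) * (-(c*I))^2) = c^4 := eqB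
  -- names for the four unknown cardinalities
  set k3 : ℕ := (flt c).card with hk3
  set k4 : ℕ := (flt (-c)).card with hk4
  set k5 : ℕ := (flt (c*I)).card with hk5
  set k6 : ℕ := (flt (-(c*I))).card with hk6
  -- real-form equations
  have eqA' : ((x^2 + k3*x - k4*x : ℝ):ℂ) + ((k5*x - k6*x : ℝ):ℂ)*I
      = ((x^4:ℝ):ℂ) + ((0:ℝ):ℂ)*I := by
    have h1 : ((x^2 + k3*x - k4*x : ℝ):ℂ) + ((k5*x - k6*x : ℝ):ℂ)*I
        = c^2 + ((k3:ℂ) * c + (k4:ℂ) * (-c) + (k5:ℂ) * (c*I) + (k6:ℂ) * (-(c*I))) := by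
      rw [hc_eq]; push_cast; ring
    have h2 : ((x^4:ℝ):ℂ) + ((0:ℝ):ℂ)*I = c^4 := by
      rw [hc_eq]; push_cast; ring
    rw [h1, h2]
    exact eqA
  obtain ⟨reA, imA⟩ := (hkey _ _ _ _).1 eqA'
  have hBC : ((k3:ℂ) + k4) * c^2 = ((k5:ℂ) + k6) * c^2 := by
    linear_combination eqB - ((k5:ℂ) + k6) * c^2 * Complex.I_sq
  have hE4 : k3 + k4 = k5 + k6 := by
    have h := mul_right_cancel₀ ne_c2_0 hBC
    exact_mod_cast h
  have hxne : x ≠ 0 := by linarith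
  have h56 : k5 = k6 := by
    have h1 : ((k5:ℝ) - k6) * x = 0 := by linarith [imA]
    rcases mul_eq_zero.1 h1 with h | h
    · have : (k5:ℝ) = k6 := by linarith
      exact_mod_cast this
    · exact absurd h hxne
  -- translate everything to the rational-cast level via b
  have hbm : b = 2 ^ (m - 1) := by
    rw [hb]
    congr 1
    omega
  have hbpos : 0 < b := by rw [hbm]; positivity
  have hbx : x = 2 * (b:ℝ) := by
    rw [hx_def, hbm]
    push_cast
    conv_lhs => rw [show m = (m-1)+1 by omega]
    rw [pow_succ]
    ring
  have hbC : c = 2 * (b:ℂ) := by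
    rw [hc_def, hbm]
    push_cast
    conv_lhs => rw [show m = (m-1)+1 by omega]
    rw [pow_succ]
    ring
  have hbR0 : (b:ℝ) ≠ 0 := by positivity
  have hx2 : x^2 = (2:ℝ) ^ (m + m) := by rw [hx_def, pow_add]; ring
  have hx4 : x^4 = (2:ℝ) ^ (m + m) * (2:ℝ) ^ (m + m) := by rw [hx_def, pow_add]; ring
  have hE1R : (k3:ℝ) + k4 + k5 + k6 + x^2 = x^4 := by
    have h : (k3:ℝ) + k4 + k5 + k6 + (2:ℝ)^(m+m) = (2:ℝ)^(m+m) * (2:ℝ)^(m+m) := by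
      exact_mod_cast hE1
    rw [hx2, hx4]
    linarith
  have hE4R : (k3:ℝ) + k4 = (k5:ℝ) + k6 := by exact_mod_cast hE4
  have h56R : (k5:ℝ) = k6 := by exact_mod_cast h56
  rw [hbx] at hE1R reA
  have hsum34 : (k3:ℝ) + k4 = 8*(b:ℝ)^4 - 2*(b:ℝ)^2 := by
    linear_combination (1/2 : ℝ) * hE1R + (1/2 : ℝ) * hE4R
  have hdiff34 : (k3:ℝ) - k4 = 8*(b:ℝ)^3 - 2*(b:ℝ) := by
    have h2b : (2:ℝ) * (b:ℝ) ≠ 0 := by positivity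
    have h : (2*(b:ℝ)) * ((k3:ℝ) - k4) = (2*(b:ℝ)) * (8*(b:ℝ)^3 - 2*(b:ℝ)) := by
      linear_combination reA
    exact mul_left_cancel₀ h2b h
  have G3 : (k3:ℝ) = (b:ℝ) * (4*(b:ℝ)^3 + 4*(b:ℝ)^2 - (b:ℝ) - 1) := by
    linear_combination (1/2:ℝ) * hsum34 + (1/2:ℝ) * hdiff34
  have G4 : (k4:ℝ) = (b:ℝ) * (4*(b:ℝ)^3 - 4*(b:ℝ)^2 - (b:ℝ) + 1) := by
    linear_combination (1/2:ℝ) * hsum34 - (1/2:ℝ) * hdiff34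
  have G5 : (k5:ℝ) = (b:ℝ)^2 * (4*(b:ℝ)^2 - 1) := by
    linear_combination (1/4:ℝ) * hE1R - (1/4:ℝ) * hE4R + (1/2:ℝ) * h56R
  have G6 : (k6:ℝ) = (b:ℝ)^2 * (4*(b:ℝ)^2 - 1) := by
    linear_combination G5 - h56R
  have hN2R : ((flt 0).card : ℝ) = 4*(b:ℝ)^2 - 1 := by
    have h : ((flt 0).card : ℝ) + 1 = (2:ℝ)^(m+m) := by exact_mod_cast hN2
    rw [← hx2, hbx] at h
    linarith
  -- card of subtype = card of filter
  have hcard_sub : ∀ v : ℂ, Nat.card {χ : AddChar (GR n) ℂ // W χ = v} = (flt v).card := by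
    intro v
    rw [Nat.card_eq_fintype_card, Fintype.card_subtype, hflt_def]
  have hQR : Function.Injective ((↑) : ℚ → ℝ) := Rat.cast_injective
  refine ⟨?_, ?_, ?_, ?_, ?_, ?_⟩
  · rw [show (4 * (b:ℂ)^2 : ℂ) = c^2 by rw [hbC]; ring, hcard_sub, h_f1,
      Finset.card_singleton]
  · rw [hcard_sub 0]
    apply hQR
    push_cast
    linarith [hN2R]
  · rw [show (2 * (b:ℂ) : ℂ) = c by rw [hbC], hcard_sub]
    apply hQR
    push_cast
    linarith [G3]
  · rw [show (-(2 * (b:ℂ)) : ℂ) = -c by rw [hbC], hcard_sub]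
    apply hQR
    push_cast
    linarith [G4]
  · rw [show (2 * (b:ℂ) * I : ℂ) = c*I by rw [hbC], hcard_sub]
    apply hQR
    push_cast
    linarith [G5]
  · rw [show (-(2 * (b:ℂ) * I) : ℂ) = -(c*I) by rw [hbC], hcard_sub]
    apply hQR
    push_cast
    linarith [G6]

end
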